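/- Let α > −1 and let φ : 𝔹_N → 𝔹_N be holomorphic. Suppose that for every Orlicz function ψ and every A > 0 there exists h₀ ∈ (0,1) such that v_α(φ⁻¹(S(ζ,h))) ≤ 1/ψ(A·ψ⁻¹(1/h^{N(α)})) for all 0 < h < h₀ and all ζ ∈ 𝕊_N. Then sup_{z ∈ 𝔹_N} |φ(z)| < 1. -/

import Mathlib

open Set Filter

/-- An Orlicz function: a strictly convex function `psi : [0,oo) -> [0,oo)` with `psi 0 = 0`,
`psi` continuous at `0`, and `psi x / x -> oo` as `x -> oo`. -/
def OrliczFunction (ψ : ℝ → ℝ) : Prop :=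
  StrictConvexOn ℝ (Ici 0) ψ ∧ (∀ x ∈ Ici (0:ℝ), 0 ≤ ψ x) ∧ ψ 0 = 0 ∧
    ContinuousWithinAt ψ (Ici 0) 0 ∧ Tendsto (fun x => ψ x / x) atTop atTop

/-- `ψinv` is the inverse of the Orlicz function `ψ`, viewed as an increasing bijection
of `[0,oo)` onto itself. -/
def OrliczInverse (ψ ψinv : ℝ → ℝ) : Prop :=
  (∀ x, 0 ≤ x → ψinv (ψ x) = x) ∧ (∀ y, 0 ≤ y → ψ (ψinv y) = y) ∧ (∀ y, 0 ≤ y → 0 ≤ ψinv y)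

/-- The nabla_0-condition. -/
def Nabla0 (ψ : ℝ → ℝ) : Prop :=
  ∀ B > (1:ℝ), ∃ C ≥ (1:ℝ), ∃ x₀ > (0:ℝ), ∀ x y : ℝ, x₀ ≤ x → x ≤ y →
    ψ (B * x) / ψ x ≤ ψ (C * B * y) / ψ y

/-- The uniform nabla_0-condition. -/
def UniformNabla0 (ψ : ℝ → ℝ) : Prop :=
  ∃ C ≥ (1:ℝ), ∀ B > (1:ℝ), ∃ x₀ > (0:ℝ), ∀ x y : ℝ, x₀ ≤ x → x ≤ y →
    ψ (B * x) / ψ x ≤ ψ (C * B * y) / ψ y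

/-- The nabla_2-condition. -/
def Nabla2 (ψ : ℝ → ℝ) : Prop :=
  ∃ β > (1:ℝ), ∃ x₀ > (0:ℝ), ∀ x ≥ x₀, 2 * β * ψ x ≤ ψ (β * x)

/-- The Delta_2-condition. -/
def Delta2 (ψ : ℝ → ℝ) : Prop :=
  ∃ K > (1:ℝ), ∃ x₀ > (0:ℝ), ∀ x ≥ x₀, ψ (2 * x) ≤ K * ψ x

/-- The Delta^2-condition. -/
def DeltaSquare (ψ : ℝ → ℝ) : Prop :=
  ∃ C > (0:ℝ), ∃ x₀ > (0:ℝ), ∀ x ≥ x₀, (ψ x) ^ 2 ≤ ψ (C * x)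

open MeasureTheory Set Filter Metric

/-- The non-isotropic ball `S(ζ,h) = {z ∈ B_N : |1 − ⟨z,ζ⟩| < h}`, where
`⟨z,ζ⟩ = Σ zᵢ conj ζᵢ` is the Hermitian inner product (i.e. `⟪ζ, z⟫` in Mathlib's
convention). -/
def nonisotropicBall (N : ℕ) (ζ : EuclideanSpace ℂ (Fin N)) (h : ℝ) :
    Set (EuclideanSpace ℂ (Fin N)) :=
  {z | ‖z‖ < 1 ∧ ‖1 - (inner ℂ ζ z : ℂ)‖ < h}

/-- The weighted measure `(1−|z|²)^α dv` on the unit ball of `ℂ^N`. -/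
noncomputable def wBergman (N : ℕ) [MeasurableSpace (EuclideanSpace ℂ (Fin N))]
    [BorelSpace (EuclideanSpace ℂ (Fin N))] (α : ℝ) :
    Measure (EuclideanSpace ℂ (Fin N)) :=
  (volume.restrict (Metric.ball 0 1)).withDensity
    fun z => ENNReal.ofReal ((1 - ‖z‖ ^ 2) ^ α)

/-- The normalized weighted measure `v_α = c_α (1−|z|²)^α dv` on the unit ball of `ℂ^N`,
with `c_α` chosen so that `v_α(B_N) = 1`. -/
noncomputable def vBergman (N : ℕ) [MeasurableSpace (EuclideanSpace ℂ (Fin N))]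
    [BorelSpace (EuclideanSpace ℂ (Fin N))] (α : ℝ) :
    Measure (EuclideanSpace ℂ (Fin N)) :=
  (wBergman N α Set.univ)⁻¹ • wBergman N α


open scoped ENNReal NNReal

noncomputable def Sseq (G : ℝ → ℝ) : ℕ → ℝ
  | 0 => 1
  | (m+1) => Sseq G m + G (((m:ℝ)+2)^2 * Sseq G m)

noncomputable def cseq (G : ℝ → ℝ) (m : ℕ) : ℝ := G (((m:ℝ)+2)^2 * Sseq G m)

noncomputable def psiFun (G : ℝ → ℝ) (x : ℝ) : ℝ :=
  x^2 + ∑ j ∈ Finset.range ⌈x⌉₊, cseq G j * (max (x - (j+1)) 0)^2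

variable {G : ℝ → ℝ}

lemma cseq_nonneg (hG0 : ∀ y, 0 ≤ G y) (m : ℕ) : 0 ≤ cseq G m := hG0 _

lemma Sseq_mono (hG0 : ∀ y, 0 ≤ G y) : Monotone (Sseq G) := by
  apply monotone_nat_of_le_succ
  intro n
  have := hG0 (((n:ℝ)+2)^2 * Sseq G n)
  simp only [Sseq]; linarith

lemma Sseq_one_le (hG0 : ∀ y, 0 ≤ G y) (m : ℕ) : 1 ≤ Sseq G m := by
  have := Sseq_mono hG0 (Nat.zero_le m)
  simpa [Sseq] using this

lemma Sseq_eq (m : ℕ) : Sseq G m = 1 + ∑ j ∈ Finset.range m, cseq G j := by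
  induction m with
  | zero => simp [Sseq]
  | succ n ih => simp only [Sseq, cseq, Finset.sum_range_succ, ih]; ring

lemma psiFun_eq (x : ℝ) {L : ℕ} (hL : ⌈x⌉₊ ≤ L) :
    psiFun G x = x^2 + ∑ j ∈ Finset.range L, cseq G j * (max (x - (j+1)) 0)^2 := by
  unfold psiFun
  congr 1
  apply Finset.sum_subset (Finset.range_subset_range.2 hL)
  intro j hj hj'
  have hjx : x ≤ j + 1 := by
    have h1 : x ≤ (⌈x⌉₊ : ℝ) := Nat.le_ceil x
    have h2 : (⌈x⌉₊ : ℝ) ≤ (j : ℝ) := by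
      exact_mod_cast Nat.le_of_not_lt (fun h => hj' (Finset.mem_range.2 h))
    linarith
  have : max (x - (j+1)) 0 = 0 := max_eq_right (by linarith)
  rw [this]; ring

lemma psiFun_continuous : Continuous (psiFun G) := by
  rw [continuous_iff_continuousAt]
  intro x₀
  set L : ℕ := ⌈x₀⌉₊ + 1 with hLdef
  have hcont : Continuous (fun x : ℝ => x^2 + ∑ j ∈ Finset.range L,
      cseq G j * (max (x - (j+1)) 0)^2) := by
    apply Continuous.add (by fun_prop)
    apply continuous_finset_sum
    intro j _
    apply Continuous.mul continuous_const
    exact ((continuous_id.sub continuous_const).max continuous_const).pow 2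
  have hx₀ : x₀ < (L : ℝ) := by
    have h2 : x₀ ≤ (⌈x₀⌉₊ : ℝ) := Nat.le_ceil x₀
    have : (L:ℝ) = (⌈x₀⌉₊ : ℝ) + 1 := by push_cast [hLdef]; ring
    linarith
  apply ContinuousAt.congr (hcont.continuousAt)
  have hopen : Iio ((L:ℝ)) ∈ nhds x₀ := Iio_mem_nhds hx₀
  filter_upwards [hopen] with x hx
  exact (psiFun_eq x (Nat.ceil_le.2 (le_of_lt hx))).symm

lemma psiFun_nonneg (hG0 : ∀ y, 0 ≤ G y) (x : ℝ) : 0 ≤ psiFun G x := by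
  unfold psiFun
  have : 0 ≤ ∑ j ∈ Finset.range ⌈x⌉₊, cseq G j * (max (x - (j+1)) 0)^2 :=
    Finset.sum_nonneg fun j _ => mul_nonneg (hG0 _) (sq_nonneg _)
  positivity

lemma psiFun_zero : psiFun G 0 = 0 := by simp [psiFun]

lemma psiFun_ge_sq (x : ℝ) (hG0 : ∀ y, 0 ≤ G y) : x^2 ≤ psiFun G x := by
  unfold psiFun
  have : 0 ≤ ∑ j ∈ Finset.range ⌈x⌉₊, cseq G j * (max (x - (j+1)) 0)^2 :=
    Finset.sum_nonneg fun j _ => mul_nonneg (hG0 _) (sq_nonneg _)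
  linarith

lemma sum_convexOn (hG0 : ∀ y, 0 ≤ G y) (L : ℕ) :
    ConvexOn ℝ (Ici 0) (fun x : ℝ => ∑ j ∈ Finset.range L, cseq G j * (max (x - (j+1)) 0)^2) := by
  induction L with
  | zero => simpa using convexOn_const 0 (convex_Ici (0:ℝ))
  | succ n ih =>
    have hterm : ConvexOn ℝ (Ici (0:ℝ)) (fun x : ℝ => cseq G n * (max (x - (n+1)) 0)^2) := by
      have h1 : ConvexOn ℝ (Ici (0:ℝ)) (fun x : ℝ => max (x - (n+1)) 0) := by
        have hid : ConvexOn ℝ (Ici (0:ℝ)) (fun x : ℝ => x) := convexOn_id (convex_Ici 0)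
        have hcc : ConcaveOn ℝ (Ici (0:ℝ)) (fun _ : ℝ => ((n:ℝ)+1)) :=
          concaveOn_const _ (convex_Ici 0)
        have hsub := hid.sub hcc
        have hzero : ConvexOn ℝ (Ici (0:ℝ)) (fun _ : ℝ => (0:ℝ)) :=
          convexOn_const _ (convex_Ici 0)
        have := hsub.sup hzero
        simpa [Pi.sup_def, Pi.sub_def] using this
      have h2 : ConvexOn ℝ (Ici (0:ℝ)) ((fun x : ℝ => max (x - (n+1)) 0) ^ 2) :=
        h1.pow (fun x _ => le_max_right _ _) 2
      have h3 := ConvexOn.smul (𝕜 := ℝ) (c := cseq G n) (cseq_nonneg hG0 n) h2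
      simpa [smul_eq_mul, Pi.pow_apply] using h3
    have := ih.add hterm
    simp only [Finset.sum_range_succ]; exact this

lemma psiFun_strictConvexOn (hG0 : ∀ y, 0 ≤ G y) : StrictConvexOn ℝ (Ici 0) (psiFun G) := by
  constructor
  · exact convex_Ici 0
  · intro x hx y hy hxy a b ha hb hab
    set L : ℕ := ⌈max x y⌉₊ with hL
    have hmax : ∀ z : ℝ, z ≤ max x y → ⌈z⌉₊ ≤ L := fun z hz => Nat.ceil_mono hz
    have hcomb : a • x + b • y ≤ max x y := by
      have h1 : a • x + b • y ≤ a * max x y + b * max x y := by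
        simp only [smul_eq_mul]
        gcongr
        · exact le_max_left _ _
        · exact le_max_right _ _
      calc a • x + b • y ≤ a * max x y + b * max x y := h1
        _ = max x y := by rw [← add_mul, hab, one_mul]
    have e1 := psiFun_eq (G := G) x (hmax x (le_max_left _ _))
    have e2 := psiFun_eq (G := G) y (hmax y (le_max_right _ _))
    have e3 := psiFun_eq (G := G) (a • x + b • y) (hmax _ hcomb)
    rw [e1, e2, e3]
    have hsq : StrictConvexOn ℝ (Ici (0:ℝ)) (fun x : ℝ => x^2) := by
      simpa using strictConvexOn_pow (le_refl 2)
    have h := (hsq.add_convexOn (sum_convexOn hG0 L)).2 hx hy hxy ha hb hab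
    simpa using h

lemma psiFun_strictMonoOn (hG0 : ∀ y, 0 ≤ G y) : StrictMonoOn (psiFun G) (Ici 0) := by
  have hconv := psiFun_strictConvexOn hG0
  have hpos : ∀ y : ℝ, 0 < y → 0 < psiFun G y := by
    intro y hy; nlinarith [psiFun_ge_sq (G := G) y hG0]
  intro x hx y hy hxy
  rcases eq_or_lt_of_le (mem_Ici.1 hx : (0:ℝ) ≤ x) with h | h
  · rw [← h, psiFun_zero]
    exact hpos y (by rw [← h] at hxy; exact hxy)
  · have hy' : 0 < y := h.trans hxy
    have hb1 : x / y < 1 := (div_lt_one hy').2 hxy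
    have hb0 : 0 < x / y := div_pos h hy'
    have key := hconv.2 (self_mem_Ici (a := (0:ℝ))) (mem_Ici.2 hy'.le) (ne_of_lt hy')
      (sub_pos.2 hb1) hb0 (by ring)
    rw [psiFun_zero] at key
    have hxe : (1 - x/y) • (0:ℝ) + (x/y) • y = x := by
      simp only [smul_eq_mul, mul_zero, zero_add]
      field_simp
    rw [hxe] at key
    simp only [smul_eq_mul, mul_zero, zero_add] at key
    have h2 : x/y * psiFun G y < psiFun G y := by nlinarith [hpos y hy']
    linarith

lemma psiFun_upper (hG0 : ∀ y, 0 ≤ G y) {t : ℝ} (ht : 0 ≤ t) :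
    psiFun G t ≤ t^2 * Sseq G ⌈t⌉₊ := by
  have hterm : ∀ j ∈ Finset.range ⌈t⌉₊, cseq G j * (max (t - (j+1)) 0)^2 ≤ t^2 * cseq G j := by
    intro j _
    have h1 : max (t - (j+1)) 0 ≤ t := by
      apply max_le _ ht
      have h0 : (0:ℝ) ≤ (j:ℝ) + 1 := by positivity
      linarith
    have h2 : (0:ℝ) ≤ max (t - (j+1)) 0 := le_max_right _ _
    have h3 := pow_le_pow_left₀ h2 h1 2
    calc cseq G j * (max (t - (j+1)) 0)^2 ≤ cseq G j * t^2 :=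
          mul_le_mul_of_nonneg_left h3 (hG0 _)
      _ = t^2 * cseq G j := by ring
  have hsum := Finset.sum_le_sum hterm
  rw [← Finset.mul_sum] at hsum
  rw [Sseq_eq]
  unfold psiFun
  have hexp : t^2 * (1 + ∑ j ∈ Finset.range ⌈t⌉₊, cseq G j)
      = t^2 + t^2 * ∑ j ∈ Finset.range ⌈t⌉₊, cseq G j := by ring
  rw [hexp]
  linarith

lemma psiFun_growth (hG0 : ∀ y, 0 ≤ G y) (hGm : Monotone G) {t : ℝ} (ht : 5 ≤ t) :
    G (psiFun G t) ≤ psiFun G (4 * t) := by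
  have ht0 : (0:ℝ) ≤ t := by linarith
  set K : ℕ := ⌈t⌉₊ with hK
  have hKt : t ≤ (K:ℝ) := Nat.le_ceil t
  have hKt1 : (K:ℝ) < t + 1 := Nat.ceil_lt_add_one ht0
  have h1 : psiFun G t ≤ t^2 * Sseq G K := psiFun_upper hG0 ht0
  have hS0 : (0:ℝ) ≤ Sseq G K := le_trans zero_le_one (Sseq_one_le hG0 K)
  have h2 : G (t^2 * Sseq G K) ≤ cseq G (3*K) := by
    unfold cseq
    apply hGm
    have ha : t^2 ≤ (((3*K:ℕ):ℝ)+2)^2 := by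
      apply pow_le_pow_left₀ ht0
      push_cast
      linarith
    have hb : Sseq G K ≤ Sseq G (3*K) :=
      Sseq_mono hG0 (by omega)
    exact mul_le_mul ha hb hS0 (by positivity)
  have h3 : cseq G (3*K) ≤ psiFun G (4 * t) := by
    have hmem : 3*K ∈ Finset.range ⌈4*t⌉₊ := by
      rw [Finset.mem_range, Nat.lt_ceil]
      push_cast
      linarith
    have hge1 : (1:ℝ) ≤ max (4*t - (((3*K:ℕ):ℝ)+1)) 0 := by
      have hval : (1:ℝ) ≤ 4*t - (((3*K:ℕ):ℝ)+1) := by push_cast; nlinarith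
      exact le_trans hval (le_max_left _ _)
    have hsq : (1:ℝ) ≤ (max (4*t - (((3*K:ℕ):ℝ)+1)) 0)^2 := by nlinarith
    have hterm : cseq G (3*K) ≤ cseq G (3*K) * (max (4*t - (((3*K:ℕ):ℝ)+1)) 0)^2 :=
      le_mul_of_one_le_right (hG0 _) hsq
    have hsum : cseq G (3*K) * (max (4*t - (((3*K:ℕ):ℝ)+1)) 0)^2
        ≤ ∑ j ∈ Finset.range ⌈4*t⌉₊, cseq G j * (max (4*t - ((j:ℝ)+1)) 0)^2 :=
      Finset.single_le_sum (f := fun j : ℕ => cseq G j * (max (4*t - ((j:ℝ)+1)) 0)^2)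
        (fun j _ => mul_nonneg (hG0 _) (sq_nonneg _)) hmem
    unfold psiFun
    have h4t : (0:ℝ) ≤ (4*t)^2 := sq_nonneg _
    linarith
  calc G (psiFun G t) ≤ G (t^2 * Sseq G K) := hGm h1
    _ ≤ cseq G (3*K) := h2
    _ ≤ psiFun G (4*t) := h3

open scoped Classical in
noncomputable def psiInvFun (ψ : ℝ → ℝ) (y : ℝ) : ℝ :=
  if h : ∃ x, 0 ≤ x ∧ ψ x = y then h.choose else 0

lemma psiInv_exists (hG0 : ∀ y, 0 ≤ G y) {y : ℝ} (hy : 0 ≤ y) :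
    ∃ x, 0 ≤ x ∧ psiFun G x = y := by
  have hcont : ContinuousOn (psiFun G) (Icc 0 (max 1 y)) := psiFun_continuous.continuousOn
  have hX : y ≤ psiFun G (max 1 y) := by
    have h1 : (max 1 y)^2 ≤ psiFun G (max 1 y) := psiFun_ge_sq _ hG0
    have h2 : (1:ℝ) ≤ max 1 y := le_max_left _ _
    nlinarith [le_max_right 1 y]
  have hsub := intermediate_value_Icc (le_trans zero_le_one (le_max_left 1 y)) hcont
  have hmem : y ∈ Icc (psiFun G 0) (psiFun G (max 1 y)) := by
    rw [psiFun_zero]; exact ⟨hy, hX⟩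
  obtain ⟨x, hx, hxy⟩ := hsub hmem
  exact ⟨x, hx.1, hxy⟩

lemma exists_orlicz (G : ℝ → ℝ) (hG0 : ∀ y, 0 ≤ G y) (hGm : Monotone G) :
    ∃ ψ ψinv : ℝ → ℝ, OrliczFunction ψ ∧ OrliczInverse ψ ψinv ∧
      StrictMonoOn ψ (Ici 0) ∧ (∀ t : ℝ, 5 ≤ t → G (ψ t) ≤ ψ (4 * t)) := by
  refine ⟨psiFun G, psiInvFun (psiFun G), ?_, ?_, psiFun_strictMonoOn hG0,
    fun t ht => psiFun_growth hG0 hGm ht⟩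
  · refine ⟨psiFun_strictConvexOn hG0, fun x _ => psiFun_nonneg hG0 x, psiFun_zero,
      (psiFun_continuous.continuousAt).continuousWithinAt, ?_⟩
    apply tendsto_atTop_mono' atTop ?_ tendsto_id
    filter_upwards [eventually_ge_atTop (1:ℝ)] with x hx
    have hge := psiFun_ge_sq (G := G) x hG0
    have hx0 : (0:ℝ) < x := by linarith
    show id x ≤ psiFun G x / x
    rw [id_eq, le_div_iff₀ hx0]
    nlinarith
  · refine ⟨?_, ?_, ?_⟩
    · intro x hx
      unfold psiInvFun
      have hex : ∃ x', 0 ≤ x' ∧ psiFun G x' = psiFun G x := ⟨x, hx, rfl⟩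
      rw [dif_pos hex]
      exact (psiFun_strictMonoOn hG0).injOn hex.choose_spec.1 hx hex.choose_spec.2
    · intro y hy
      have hex := psiInv_exists hG0 hy
      unfold psiInvFun
      rw [dif_pos hex]
      exact hex.choose_spec.2
    · intro y hy
      have hex := psiInv_exists hG0 hy
      unfold psiInvFun
      rw [dif_pos hex]
      exact hex.choose_spec.1

open MeasureTheory Set Filter Metric
open scoped ENNReal NNReal


section Measure
variable (N : ℕ) [MeasurableSpace (EuclideanSpace ℂ (Fin N))]
  [BorelSpace (EuclideanSpace ℂ (Fin N))]

lemma wBergman_apply (α : ℝ) {s : Set (EuclideanSpace ℂ (Fin N))} (hs : MeasurableSet s)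
    (hsub : s ⊆ Metric.ball 0 1) :
    wBergman N α s = ∫⁻ z in s, ENNReal.ofReal ((1 - ‖z‖ ^ 2) ^ α) ∂volume := by
  rw [wBergman, withDensity_apply _ hs, Measure.restrict_restrict hs,
    inter_eq_self_of_subset_left hsub]

lemma wBergman_pos_of_isOpen (α : ℝ) {V : Set (EuclideanSpace ℂ (Fin N))}
    (hV : IsOpen V) (hsub : V ⊆ Metric.ball 0 1) (hne : V.Nonempty) :
    0 < wBergman N α V := by
  obtain ⟨z₀, hz₀⟩ := hne
  obtain ⟨δ, hδpos, hδ⟩ := Metric.isOpen_iff.1 hV z₀ hz₀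
  have hr0 : ‖z₀‖ < 1 := by
    have := hsub hz₀
    rwa [mem_ball_zero_iff] at this
  have hr0' : (0:ℝ) ≤ ‖z₀‖ := norm_nonneg _
  set R : ℝ := (1 + ‖z₀‖)/2 with hR
  have hR1 : R < 1 := by rw [hR]; linarith
  have hR0 : 0 < R := by rw [hR]; linarith
  set ε : ℝ := min δ ((1 - ‖z₀‖)/2) with hε
  have hεpos : 0 < ε := lt_min hδpos (by linarith)
  have hballV : Metric.ball z₀ ε ⊆ V := fun z hz => hδ (mem_of_mem_of_subset hz
    (Metric.ball_subset_ball (min_le_left _ _)))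
  have hnorm : ∀ z ∈ Metric.ball z₀ ε, ‖z‖ < R := by
    intro z hz
    rw [mem_ball] at hz
    have : dist z z₀ < (1 - ‖z₀‖)/2 := lt_of_lt_of_le hz (min_le_right _ _)
    have h2 : ‖z‖ ≤ ‖z₀‖ + dist z z₀ := by
      rw [dist_eq_norm]
      have h3 := norm_add_le z₀ (z - z₀)
      simpa using h3
    rw [hR]; linarith
  set c : ℝ := min ((1 - R^2) ^ α) 1 with hc
  have hcpos : 0 < c := by
    apply lt_min _ one_pos
    apply Real.rpow_pos_of_pos
    nlinarith
  have hpt : ∀ z ∈ Metric.ball z₀ ε,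
      ENNReal.ofReal c ≤ ENNReal.ofReal ((1 - ‖z‖ ^ 2) ^ α) := by
    intro z hz
    apply ENNReal.ofReal_le_ofReal
    have hz1 : ‖z‖ < R := hnorm z hz
    have hz0 : (0:ℝ) ≤ ‖z‖ := norm_nonneg _
    have hle : 1 - R^2 ≤ 1 - ‖z‖^2 := by nlinarith
    rcases le_or_gt 0 α with hα | hα
    · calc c ≤ (1 - R^2) ^ α := min_le_left _ _
        _ ≤ (1 - ‖z‖^2) ^ α := Real.rpow_le_rpow (by nlinarith) hle hα
    · calc c ≤ 1 := min_le_right _ _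
        _ ≤ (1 - ‖z‖^2) ^ α :=
          Real.one_le_rpow_of_pos_of_le_one_of_nonpos (by nlinarith) (by nlinarith) hα.le
  have hsub2 : Metric.ball z₀ ε ⊆ Metric.ball (0:EuclideanSpace ℂ (Fin N)) 1 :=
    hballV.trans hsub
  have key : ENNReal.ofReal c * volume (Metric.ball z₀ ε) ≤ wBergman N α (Metric.ball z₀ ε) := by
    rw [wBergman_apply N α measurableSet_ball hsub2, ← setLIntegral_const]
    exact setLIntegral_mono' measurableSet_ball hpt
  have hvol : 0 < volume (Metric.ball z₀ ε) := measure_ball_pos volume z₀ hεpos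
  have : 0 < ENNReal.ofReal c * volume (Metric.ball z₀ ε) :=
    ENNReal.mul_pos (by simpa using (ENNReal.ofReal_pos.2 hcpos).ne') hvol.ne'
  exact lt_of_lt_of_le this (le_trans key (measure_mono hballV))

lemma pow_sub_pow_le_aux {a b : ℝ} (d : ℕ) (ha : 0 ≤ a) (hab : a ≤ b) (hb : b ≤ 1) :
    b^d - a^d ≤ d * (b - a) := by
  induction d with
  | zero => simp
  | succ n ih =>
    have hbn : b^n ≤ 1 := pow_le_one₀ (ha.trans hab) hb
    have han : a^n ≤ b^n := pow_le_pow_left₀ ha hab n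
    have h1 : (0:ℝ) ≤ a^n := pow_nonneg ha n
    have key : b^(n+1) - a^(n+1) = b*(b^n - a^n) + (b - a)*a^n := by ring
    push_cast
    nlinarith

lemma wBergman_univ_lt_top (hN : 1 ≤ N) {α : ℝ} (hα : -1 < α) :
    wBergman N α Set.univ < ⊤ := by
  classical
  haveI : Nontrivial (EuclideanSpace ℂ (Fin N)) := by
    refine ⟨⟨EuclideanSpace.single ⟨0, hN⟩ 1, 0, fun h => ?_⟩⟩
    have := congrArg (fun v => v ⟨0, hN⟩) h
    simp [EuclideanSpace.single_apply] at this
  set d : ℕ := Module.finrank ℝ (EuclideanSpace ℂ (Fin N)) with hd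
  set B : ℝ≥0∞ := volume (Metric.ball (0:EuclideanSpace ℂ (Fin N)) 1) with hB
  have hBfin : B < ⊤ := measure_ball_lt_top
  set r : ℕ → ℝ := fun k => 1 - (1/2:ℝ)^k with hrdef
  have hr0 : ∀ k, 0 ≤ r k := by
    intro k
    have : (1/2:ℝ)^k ≤ 1 := pow_le_one₀ (by norm_num) (by norm_num)
    simp only [hrdef]; linarith
  have hrmono : ∀ k, r k ≤ r (k+1) := by
    intro k
    have : (1/2:ℝ)^(k+1) ≤ (1/2:ℝ)^k := pow_le_pow_of_le_one (by norm_num) (by norm_num) (by omega)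
    simp only [hrdef]; linarith
  have hr1 : ∀ k, r k ≤ 1 := by
    intro k
    have : (0:ℝ) ≤ (1/2:ℝ)^k := by positivity
    simp only [hrdef]; linarith
  set A : ℕ → Set (EuclideanSpace ℂ (Fin N)) := fun k => Metric.ball 0 (r (k+1)) \ Metric.ball 0 (r k) with hA
  have measA : ∀ k, MeasurableSet (A k) := fun k => measurableSet_ball.diff measurableSet_ball
  have hcover : Metric.ball (0:EuclideanSpace ℂ (Fin N)) 1 ⊆ ⋃ k, A k := by
    intro z hz
    rw [mem_ball_zero_iff] at hz
    have hu : 0 < 1 - ‖z‖ := by linarith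
    have hex : ∃ n : ℕ, (1/2:ℝ)^n < 1 - ‖z‖ := exists_pow_lt_of_lt_one hu (by norm_num)
    have hne0 : Nat.find hex ≠ 0 := by
      intro h0
      have := Nat.find_spec hex
      rw [h0] at this
      simp at this
      have := norm_nonneg z
      linarith
    obtain ⟨m, hm⟩ := Nat.exists_eq_succ_of_ne_zero hne0
    have hspec := Nat.find_spec hex
    rw [hm, Nat.succ_eq_add_one] at hspec
    have hmin : ¬((1/2:ℝ)^m < 1 - ‖z‖) := Nat.find_min hex (by omega)
    push_neg at hmin
    refine mem_iUnion.2 ⟨m, ?_, ?_⟩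
    · rw [mem_ball_zero_iff]
      simp only [hrdef]
      linarith
    · rw [mem_ball_zero_iff]
      simp only [hrdef]
      push_neg
      linarith
  have hsubball : ∀ k, A k ⊆ Metric.ball (0:EuclideanSpace ℂ (Fin N)) 1 := by
    intro k
    refine (diff_subset).trans (Metric.ball_subset_ball ?_)
    exact hr1 (k+1)
  -- pointwise density bound on A k
  set Mk : ℕ → ℝ := fun k => max (((1/2:ℝ)^(k+1)) ^ α) 1 with hMk
  have hMknn : ∀ k, 0 ≤ Mk k := fun k => le_trans zero_le_one (le_max_right _ _)
  have hAk : ∀ k, wBergman N α (A k) ≤ ENNReal.ofReal (Mk k) * volume (A k) := by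
    intro k
    rw [wBergman_apply N α (measA k) (hsubball k), ← setLIntegral_const]
    apply setLIntegral_mono' (measA k)
    intro z hz
    apply ENNReal.ofReal_le_ofReal
    obtain ⟨hz1, hz2⟩ := hz
    rw [mem_ball_zero_iff] at hz1
    have hz0 : (0:ℝ) ≤ ‖z‖ := norm_nonneg _
    have hzlt1 : ‖z‖ < 1 := lt_of_lt_of_le hz1 (hr1 _)
    have hlow : (1/2:ℝ)^(k+1) ≤ 1 - ‖z‖^2 := by
      have h1 : ‖z‖ < 1 - (1/2:ℝ)^(k+1) := hz1
      nlinarith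
    rcases le_or_gt 0 α with hα' | hα'
    · calc (1 - ‖z‖^2) ^ α ≤ 1 := Real.rpow_le_one (by nlinarith) (by nlinarith) hα'
        _ ≤ Mk k := le_max_right _ _
    · calc (1 - ‖z‖^2) ^ α ≤ ((1/2:ℝ)^(k+1)) ^ α :=
          Real.rpow_le_rpow_of_nonpos (by positivity) hlow hα'.le
        _ ≤ Mk k := le_max_left _ _
  have hvolAk : ∀ k, volume (A k) ≤ ENNReal.ofReal ((d:ℝ) * (1/2)^(k+1)) * B := by
    intro k
    have hdiff : volume (A k) = volume (Metric.ball (0:EuclideanSpace ℂ (Fin N)) (r (k+1))) -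
        volume (Metric.ball (0:EuclideanSpace ℂ (Fin N)) (r k)) := by
      rw [hA]
      exact measure_diff (Metric.ball_subset_ball (hrmono k))
        measurableSet_ball.nullMeasurableSet measure_ball_lt_top.ne
    have hball1 : volume (Metric.ball (0:EuclideanSpace ℂ (Fin N)) (r (k+1)))
        = ENNReal.ofReal (r (k+1) ^ d) * B :=
      Measure.addHaar_ball volume (0:EuclideanSpace ℂ (Fin N)) (hr0 (k+1))
    have hball2 : volume (Metric.ball (0:EuclideanSpace ℂ (Fin N)) (r k))
        = ENNReal.ofReal (r k ^ d) * B :=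
      Measure.addHaar_ball volume (0:EuclideanSpace ℂ (Fin N)) (hr0 k)
    rw [hdiff, hball1, hball2]
    rw [tsub_le_iff_right, ← add_mul, ← ENNReal.ofReal_add (by positivity) (pow_nonneg (hr0 k) d)]
    apply mul_le_mul_left
    apply ENNReal.ofReal_le_ofReal
    have hkey : r (k+1) ^ d - r k ^ d ≤ d * (r (k+1) - r k) :=
      pow_sub_pow_le_aux d (hr0 k) (hrmono k) (hr1 (k+1))
    have hstep : r (k+1) - r k = (1/2:ℝ)^(k+1) := by
      simp only [hrdef]
      rw [pow_succ]
      ring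
    rw [hstep] at hkey
    linarith
  -- summability
  set q : ℝ := (1/2:ℝ) ^ (α+1) with hq
  have hq0 : 0 ≤ q := Real.rpow_nonneg (by norm_num) _
  have hq1 : q < 1 := Real.rpow_lt_one (by norm_num) (by norm_num) (by linarith)
  set bk : ℕ → ℝ := fun k => Mk k * ((d:ℝ) * (1/2)^(k+1)) with hbk
  have hbknn : ∀ k, 0 ≤ bk k := fun k => mul_nonneg (hMknn k) (by positivity)
  have hrpow : ∀ k : ℕ, ((1/2:ℝ)^(k+1)) ^ α * (1/2:ℝ)^(k+1) = q^(k+1) := by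
    intro k
    rw [hq, ← Real.rpow_natCast (1/2:ℝ) (k+1), ← Real.rpow_natCast ((1/2:ℝ)^(α+1)) (k+1)]
    rw [← Real.rpow_mul (by norm_num : (0:ℝ) ≤ 1/2), ← Real.rpow_mul (by norm_num : (0:ℝ) ≤ 1/2)]
    rw [← Real.rpow_add (by norm_num : (0:ℝ) < 1/2)]
    congr 1
    ring
  have hble : ∀ k, bk k ≤ (d:ℝ) * (q^(k+1) + (1/2:ℝ)^(k+1)) := by
    intro k
    have hMle : Mk k ≤ ((1/2:ℝ)^(k+1)) ^ α + 1 := by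
      apply max_le
      · have : (0:ℝ) ≤ ((1/2:ℝ)^(k+1)) ^ α := Real.rpow_nonneg (by positivity) _
        linarith
      · have : (0:ℝ) ≤ ((1/2:ℝ)^(k+1)) ^ α := Real.rpow_nonneg (by positivity) _
        linarith
    have hε : (0:ℝ) ≤ (1/2:ℝ)^(k+1) := by positivity
    calc bk k ≤ (((1/2:ℝ)^(k+1)) ^ α + 1) * ((d:ℝ) * (1/2)^(k+1)) := by
          apply mul_le_mul_of_nonneg_right hMle (by positivity)
      _ = (d:ℝ) * (((1/2:ℝ)^(k+1)) ^ α * (1/2:ℝ)^(k+1) + (1/2:ℝ)^(k+1)) := by ring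
      _ = (d:ℝ) * (q^(k+1) + (1/2:ℝ)^(k+1)) := by rw [hrpow]
  have hsummable : Summable bk := by
    apply Summable.of_nonneg_of_le hbknn hble
    apply Summable.mul_left
    apply Summable.add
    · have := (summable_geometric_of_lt_one hq0 hq1).mul_right q
      simpa [pow_succ] using this
    · have := (summable_geometric_of_lt_one (by norm_num : (0:ℝ) ≤ 1/2) (by norm_num)).mul_right (1/2:ℝ)
      simpa [pow_succ] using this
  -- assemble
  have step1 : wBergman N α Set.univ = wBergman N α (Metric.ball (0:EuclideanSpace ℂ (Fin N)) 1) := by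
    rw [wBergman, withDensity_apply _ MeasurableSet.univ, Measure.restrict_univ,
      withDensity_apply _ measurableSet_ball, Measure.restrict_restrict measurableSet_ball,
      inter_self]
  have step2 : wBergman N α (Metric.ball (0:EuclideanSpace ℂ (Fin N)) 1) ≤ ∑' k, wBergman N α (A k) :=
    le_trans (measure_mono hcover) (measure_iUnion_le _)
  have step3 : ∑' k, wBergman N α (A k) ≤ ∑' k, ENNReal.ofReal (bk k) * B := by
    apply ENNReal.tsum_le_tsum
    intro k
    calc wBergman N α (A k) ≤ ENNReal.ofReal (Mk k) * volume (A k) := hAk k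
      _ ≤ ENNReal.ofReal (Mk k) * (ENNReal.ofReal ((d:ℝ) * (1/2)^(k+1)) * B) :=
        mul_le_mul_right (hvolAk k) _
      _ = ENNReal.ofReal (bk k) * B := by
        rw [← mul_assoc, ← ENNReal.ofReal_mul (hMknn k), hbk]
  have step4 : ∑' k, ENNReal.ofReal (bk k) * B = ENNReal.ofReal (∑' k, bk k) * B := by
    rw [ENNReal.tsum_mul_right, ← ENNReal.ofReal_tsum_of_nonneg hbknn hsummable]
  have step5 : ENNReal.ofReal (∑' k, bk k) * B < ⊤ :=
    ENNReal.mul_lt_top ENNReal.ofReal_lt_top hBfin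
  calc wBergman N α Set.univ = wBergman N α (Metric.ball (0:EuclideanSpace ℂ (Fin N)) 1) := step1
    _ ≤ ∑' k, wBergman N α (A k) := step2
    _ ≤ ∑' k, ENNReal.ofReal (bk k) * B := step3
    _ = ENNReal.ofReal (∑' k, bk k) * B := step4
    _ < ⊤ := step5

end Measure

lemma vBergman_toReal_pos (N : ℕ) [MeasurableSpace (EuclideanSpace ℂ (Fin N))]
    [BorelSpace (EuclideanSpace ℂ (Fin N))] (hN : 1 ≤ N) {α : ℝ} (hα : -1 < α)
    {s : Set (EuclideanSpace ℂ (Fin N))} (hpos : 0 < wBergman N α s) :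
    0 < (vBergman N α s).toReal := by
  have hfin := wBergman_univ_lt_top N hN hα
  have hball : 0 < wBergman N α (Metric.ball (0:EuclideanSpace ℂ (Fin N)) 1) :=
    wBergman_pos_of_isOpen N α isOpen_ball subset_rfl ⟨0, mem_ball_self one_pos⟩
  have hU0 : 0 < wBergman N α Set.univ := lt_of_lt_of_le hball (measure_mono (subset_univ _))
  have hsfin : wBergman N α s < ⊤ := lt_of_le_of_lt (measure_mono (subset_univ _)) hfin
  rw [vBergman, Measure.smul_apply, smul_eq_mul]
  apply ENNReal.toReal_pos
  · exact (ENNReal.mul_pos (ENNReal.inv_ne_zero.2 hfin.ne) hpos.ne').ne'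
  · exact ENNReal.mul_ne_top (ENNReal.inv_ne_top.2 hU0.ne') hsfin.ne

/-- if `φ : B_N → B_N` is holomorphic, `α > −1`, and for every Orlicz function
`ψ` and `A > 0` one has `v_α(φ⁻¹(S(ζ,h))) ≤ 1/ψ(A·ψ⁻¹(1/h^{N+α+1}))` for all small `h`,
uniformly in `ζ ∈ S_N`, then `sup_{B_N} |φ| < 1`. -/
theorem stmt3 (N : ℕ) (hN : 1 ≤ N)
    [MeasurableSpace (EuclideanSpace ℂ (Fin N))] [BorelSpace (EuclideanSpace ℂ (Fin N))]
    (α : ℝ) (hα : -1 < α)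
    (φ : EuclideanSpace ℂ (Fin N) → EuclideanSpace ℂ (Fin N))
    (hφd : DifferentiableOn ℂ φ (Metric.ball 0 1))
    (hφm : MapsTo φ (Metric.ball 0 1) (Metric.ball 0 1))
    (hyp : ∀ ψ ψinv : ℝ → ℝ, OrliczFunction ψ → OrliczInverse ψ ψinv → ∀ A > (0:ℝ),
      ∃ h₀ ∈ Ioo (0:ℝ) 1, ∀ h : ℝ, 0 < h → h < h₀ →
        ∀ ζ : EuclideanSpace ℂ (Fin N), ‖ζ‖ = 1 →
          (vBergman N α (φ ⁻¹' nonisotropicBall N ζ h)).toReal ≤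
            1 / ψ (A * ψinv (1 / h ^ ((N : ℝ) + α + 1)))) :
    ∃ r₀ < (1:ℝ), ∀ z ∈ Metric.ball (0 : EuclideanSpace ℂ (Fin N)) 1, ‖φ z‖ ≤ r₀ := by
  by_contra hcon
  push_neg at hcon
  have hsel : ∀ n : ℕ, ∃ w, w ∈ Metric.ball (0 : EuclideanSpace ℂ (Fin N)) 1 ∧
      1 - 1/((n:ℝ)+2) < ‖φ w‖ := by
    intro n
    have hr1 : 1 - 1/((n:ℝ)+2) < 1 := by
      have : 0 < 1/((n:ℝ)+2) := by positivity
      linarith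
    obtain ⟨w, hw1, hw2⟩ := hcon _ hr1
    exact ⟨w, hw1, hw2⟩
  choose z hzball hzn using hsel
  have hφcont : ContinuousOn φ (Metric.ball 0 1) := hφd.continuousOn
  have hφz : ∀ n, ‖φ (z n)‖ < 1 := fun n => mem_ball_zero_iff.1 (hφm (hzball n))
  have hfrac : ∀ n : ℕ, (1:ℝ)/((n:ℝ)+2) ≤ 1/2 := by
    intro n
    have h2 : (2:ℝ) ≤ (n:ℝ)+2 := by
      have := Nat.cast_nonneg (α := ℝ) n
      linarith
    exact one_div_le_one_div_of_le (by norm_num) h2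
  have hφzpos : ∀ n, 0 < ‖φ (z n)‖ := by
    intro n
    have h1 := hzn n
    have h2 := hfrac n
    linarith
  set ζ : ℕ → EuclideanSpace ℂ (Fin N) :=
    fun n => ((‖φ (z n)‖ : ℂ))⁻¹ • φ (z n) with hζdef
  have hζnorm : ∀ n, ‖ζ n‖ = 1 := by
    intro n
    rw [hζdef]
    simp only [norm_smul, norm_inv, Complex.norm_real, Real.norm_eq_abs]
    rw [abs_of_pos (hφzpos n), inv_mul_cancel₀ (hφzpos n).ne']
  have hmem : ∀ n, φ (z n) ∈ nonisotropicBall N (ζ n) (1/((n:ℝ)+2)) := by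
    intro n
    refine ⟨hφz n, ?_⟩
    have hinner : (inner ℂ (ζ n) (φ (z n)) : ℂ) = ((‖φ (z n)‖ : ℝ) : ℂ) := by
      rw [hζdef]
      simp only [inner_smul_left, map_inv₀, Complex.conj_ofReal]
      rw [inner_self_eq_norm_sq_to_K]
      have hne : ((‖φ (z n)‖ : ℝ) : ℂ) ≠ 0 := by
        simp only [ne_eq, Complex.ofReal_eq_zero]
        exact (hφzpos n).ne'
      field_simp
      rfl
    rw [hinner]
    have hcast : (1 : ℂ) - ((‖φ (z n)‖ : ℝ) : ℂ) = ((1 - ‖φ (z n)‖ : ℝ) : ℂ) := by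
      push_cast; ring
    rw [hcast, Complex.norm_real, Real.norm_eq_abs, abs_of_pos (by linarith [hφz n] : (0:ℝ) < 1 - ‖φ (z n)‖)]
    linarith [hzn n]
  have hSopen : ∀ n, IsOpen (nonisotropicBall N (ζ n) (1/((n:ℝ)+2))) := by
    intro n
    have h1 : IsOpen {w : EuclideanSpace ℂ (Fin N) | ‖w‖ < 1} :=
      isOpen_lt continuous_norm continuous_const
    have h2 : IsOpen {w : EuclideanSpace ℂ (Fin N) |
        ‖1 - (inner ℂ (ζ n) w : ℂ)‖ < 1/((n:ℝ)+2)} := by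
      apply isOpen_lt _ continuous_const
      apply continuous_norm.comp
      exact continuous_const.sub (Continuous.inner continuous_const continuous_id)
    exact h1.inter h2
  have hwpos : ∀ n, 0 < wBergman N α (φ ⁻¹' nonisotropicBall N (ζ n) (1/((n:ℝ)+2))) := by
    intro n
    have hVopen : IsOpen (Metric.ball (0 : EuclideanSpace ℂ (Fin N)) 1 ∩
        φ ⁻¹' nonisotropicBall N (ζ n) (1/((n:ℝ)+2))) :=
      hφcont.isOpen_inter_preimage isOpen_ball (hSopen n)
    have hVne : z n ∈ Metric.ball (0 : EuclideanSpace ℂ (Fin N)) 1 ∩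
        φ ⁻¹' nonisotropicBall N (ζ n) (1/((n:ℝ)+2)) := ⟨hzball n, hmem n⟩
    have := wBergman_pos_of_isOpen N α hVopen inter_subset_left ⟨z n, hVne⟩
    exact lt_of_lt_of_le this (measure_mono inter_subset_right)
  obtain ⟨m, hmdef⟩ : ∃ m : ℕ → ℝ, ∀ k, m k =
      (vBergman N α (φ ⁻¹' nonisotropicBall N (ζ k) (1/((k:ℝ)+2)))).toReal :=
    ⟨_, fun k => rfl⟩
  have hm : ∀ k, 0 < m k := by
    intro k
    rw [hmdef k]
    exact vBergman_toReal_pos N hN hα (hwpos k)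
  set G : ℝ → ℝ := fun y => ∑ j ∈ Finset.range (⌈y⌉₊ + 1), (1 / m j + 1) with hGdef
  have hG0 : ∀ y, 0 ≤ G y := by
    intro y
    apply Finset.sum_nonneg
    intro j _
    have := hm j
    positivity
  have hGm : Monotone G := by
    intro y y' hyy
    apply Finset.sum_le_sum_of_subset_of_nonneg
    · apply Finset.range_subset_range.2
      have := Nat.ceil_mono hyy
      omega
    · intro j _ _
      have := hm j
      positivity
  obtain ⟨ψ, ψinv, hO, hI, hMono, hGrow⟩ := exists_orlicz G hG0 hGm
  obtain ⟨h₀, hh₀, hbound⟩ := hyp ψ ψinv hO hI 4 (by norm_num)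
  obtain ⟨hh₀pos, hh₀lt1⟩ := hh₀
  set n : ℕ := max ⌈1/h₀⌉₊ ⌈ψ 5⌉₊ with hndef
  have hhpos : (0:ℝ) < 1/((n:ℝ)+2) := by positivity
  have hhlt : (1:ℝ)/((n:ℝ)+2) < h₀ := by
    have h1 : 1/h₀ ≤ (⌈1/h₀⌉₊:ℝ) := Nat.le_ceil _
    have h2 : ((⌈1/h₀⌉₊:ℕ):ℝ) ≤ (n:ℝ) := by
      exact_mod_cast le_max_left (⌈1/h₀⌉₊) (⌈ψ 5⌉₊)
    have h3 : 1/h₀ < (n:ℝ)+2 := by linarith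
    rw [div_lt_iff₀ (by positivity)]
    calc (1:ℝ) = h₀ * (1/h₀) := by field_simp
      _ < h₀ * ((n:ℝ)+2) := mul_lt_mul_of_pos_left h3 hh₀pos
  have hn0 : (0:ℝ) ≤ (n:ℝ) := Nat.cast_nonneg n
  have hp1 : (1:ℝ) ≤ (N:ℝ) + α + 1 := by
    have : (1:ℝ) ≤ (N:ℝ) := by exact_mod_cast hN
    linarith
  have hyval : (1:ℝ) / (1/((n:ℝ)+2)) ^ ((N:ℝ) + α + 1) = ((n:ℝ)+2) ^ ((N:ℝ) + α + 1) := by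
    rw [one_div ((n:ℝ)+2), Real.inv_rpow (by positivity), one_div, inv_inv]
  have hy2 : ((n:ℝ)+2) ≤ ((n:ℝ)+2) ^ ((N:ℝ) + α + 1) := by
    calc ((n:ℝ)+2) = ((n:ℝ)+2) ^ (1:ℝ) := (Real.rpow_one _).symm
      _ ≤ ((n:ℝ)+2) ^ ((N:ℝ) + α + 1) :=
        Real.rpow_le_rpow_of_exponent_le (by linarith) hp1
  have hy0 : (0:ℝ) ≤ ((n:ℝ)+2) ^ ((N:ℝ) + α + 1) := Real.rpow_nonneg (by positivity) _
  have hψ5 : ψ 5 ≤ ((n:ℝ)+2) ^ ((N:ℝ) + α + 1) := by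
    have h1 : ψ 5 ≤ (⌈ψ 5⌉₊:ℝ) := Nat.le_ceil _
    have h2 : ((⌈ψ 5⌉₊:ℕ):ℝ) ≤ (n:ℝ) := by
      exact_mod_cast le_max_right (⌈1/h₀⌉₊) (⌈ψ 5⌉₊)
    linarith
  have ht0 : 0 ≤ ψinv (((n:ℝ)+2) ^ ((N:ℝ) + α + 1)) := hI.2.2 _ hy0
  have hψt : ψ (ψinv (((n:ℝ)+2) ^ ((N:ℝ) + α + 1))) = ((n:ℝ)+2) ^ ((N:ℝ) + α + 1) :=
    hI.2.1 _ hy0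
  have ht5 : 5 ≤ ψinv (((n:ℝ)+2) ^ ((N:ℝ) + α + 1)) := by
    by_contra hlt
    push_neg at hlt
    have h5 := hMono (mem_Ici.2 ht0) (mem_Ici.2 (by norm_num : (0:ℝ) ≤ 5)) hlt
    rw [hψt] at h5
    linarith
  have hgrow := hGrow _ ht5
  rw [hψt] at hgrow
  have hGn : 1/m n + 1 ≤ G (((n:ℝ)+2) ^ ((N:ℝ) + α + 1)) := by
    have hmemn : n ∈ Finset.range (⌈((n:ℝ)+2) ^ ((N:ℝ) + α + 1)⌉₊ + 1) := by
      rw [Finset.mem_range]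
      have hcc : ((n:ℝ)) ≤ (⌈((n:ℝ)+2) ^ ((N:ℝ) + α + 1)⌉₊:ℝ) :=
        le_trans (by linarith) (Nat.le_ceil _)
      have h3 : n ≤ ⌈((n:ℝ)+2) ^ ((N:ℝ) + α + 1)⌉₊ := by exact_mod_cast hcc
      omega
    rw [hGdef]
    exact Finset.single_le_sum (f := fun j => 1/m j + 1)
      (fun j _ => by have := hm j; positivity) hmemn
  have hb := hbound (1/((n:ℝ)+2)) hhpos hhlt (ζ n) (hζnorm n)
  rw [hyval, ← hmdef n] at hb
  have hψ4t : 1/m n + 1 ≤ ψ (4 * ψinv (((n:ℝ)+2) ^ ((N:ℝ) + α + 1))) := le_trans hGn hgrow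
  have hmn := hm n
  have h1p : 0 < 1/m n + 1 := by positivity
  have ha : 1 / ψ (4 * ψinv (((n:ℝ)+2) ^ ((N:ℝ) + α + 1))) ≤ 1/(1/m n + 1) :=
    one_div_le_one_div_of_le h1p hψ4t
  have hbb : 1/(1/m n + 1) < m n := by
    rw [div_lt_iff₀ h1p]
    have hexp : m n * (1/m n + 1) = 1 + m n := by field_simp
    rw [hexp]
    linarith
  linarith
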